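/- Let r ≥ 1 and let n_1, ..., n_r be integers with 1 < n_1 | n_2 | ... | n_r = n, let G = C_{n_1} ⊕ ... ⊕ C_{n_r} and Q = C_{n/n_1} ⊕ ... ⊕ C_{n/n_r}, and set T = Σ_{d | n} (min(η(C_{P^-(d)}^r), D(C_d^r)) − 1)/d, the sum over all positive divisors d of n, where C_m^r denotes the direct sum of r copies of C_m. Then k(G) ≤ T − k*(Q)/n; moreover, if gcd(n_i, n/n_i) = 1 for every i (so that G is a direct summand of C_n^r), then k(G) ≤ T − k*(Q). -/

import Mathlib

open scoped BigOperators

attribute [local instance] Classical.propDecidable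

/-- A sequence (multiset) over `G` is zero-sumfree if no nonempty sub-multiset sums to `0`. -/
def IsZeroSumFree {G : Type*} [AddCommGroup G] (S : Multiset G) : Prop :=
  ∀ T : Multiset G, T ≤ S → T ≠ 0 → T.sum ≠ 0

/-- A minimal zero-sum sequence: sum `0`, and no nonempty proper sub-multiset sums to `0`. -/
def IsMinimalZeroSum {G : Type*} [AddCommGroup G] (S : Multiset G) : Prop :=
  S.sum = 0 ∧ ∀ T : Multiset G, T < S → T ≠ 0 → T.sum ≠ 0

/-- The cross number of a sequence: `k(S) = Σ_{g ∈ S} 1/ord(g)`. -/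
noncomputable def crossNumber {G : Type*} [AddCommGroup G] (S : Multiset G) : ℝ :=
  (S.map fun g => (1 : ℝ) / (addOrderOf g)).sum

/-- The little cross number `k(G)`: max of `k(S)` over zero-sumfree sequences `S` over `G`. -/
noncomputable def littleCrossNumber (G : Type*) [AddCommGroup G] : ℝ :=
  sSup {x : ℝ | ∃ S : Multiset G, IsZeroSumFree S ∧ crossNumber S = x}

/-- The cross number `K(G)`: max of `k(S)` over minimal zero-sum sequences `S` over `G`. -/
noncomputable def bigCrossNumber (G : Type*) [AddCommGroup G] : ℝ :=
  sSup {x : ℝ | ∃ S : Multiset G, IsMinimalZeroSum S ∧ crossNumber S = x}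

/-- The Davenport constant `D(G)`. -/
noncomputable def davenport (G : Type*) [AddCommGroup G] : ℕ :=
  sInf {t | 1 ≤ t ∧ ∀ S : Multiset G, t ≤ Multiset.card S →
    ∃ T, T ≤ S ∧ T ≠ 0 ∧ T.sum = 0}

/-- The constant `η(G)`. -/
noncomputable def etaConst (G : Type*) [AddCommGroup G] : ℕ :=
  sInf {t | 1 ≤ t ∧ ∀ S : Multiset G, t ≤ Multiset.card S →
    ∃ T, T ≤ S ∧ T ≠ 0 ∧ Multiset.card T ≤ AddMonoid.exponent G ∧ T.sum = 0}

/-- `υ_i(d',d) = A_i / gcd(A_i, B_i)` where `A_i = gcd(d', n_i)` and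
`B_i = lcm(d, n_i)/lcm(d', n_i)`. -/
def upsilon (ni d' d : ℕ) : ℕ :=
  Nat.gcd d' ni / Nat.gcd (Nat.gcd d' ni) (Nat.lcm d ni / Nat.lcm d' ni)

/-- `k*` of `C_{n_1} ⊕ ... ⊕ C_{n_r}`, computed from the primary decomposition. -/
noncomputable def kStarTuple {r : ℕ} (n : Fin r → ℕ) : ℝ :=
  ∑ i, ∑ p ∈ (n i).primeFactors,
    ((p ^ ((n i).factorization p) : ℝ) - 1) / (p ^ ((n i).factorization p))

/-- `α(n) = Σ_{d | n} (P⁻(d) − 1)/d`. -/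
noncomputable def alphaFn (n : ℕ) : ℝ :=
  ∑ d ∈ n.divisors, ((d.minFac : ℝ) - 1) / d

/-- `β(n) = Σ_{p | n prime} (p − 1)/p`. -/
noncomputable def betaFn (n : ℕ) : ℝ :=
  ∑ p ∈ n.primeFactors, ((p : ℝ) - 1) / p






section MultisetLemmas

variable {α β : Type*}

lemma exists_le_map {f : α → β} :
    ∀ (A : Multiset α) (U : Multiset β), U ≤ A.map f → ∃ B, B ≤ A ∧ B.map f = U := by
  intro A
  induction A using Multiset.induction_on with
  | empty => intro U hU; simp only [Multiset.map_zero, Multiset.le_zero] at hU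
             exact ⟨0, le_rfl, by simp [hU]⟩
  | cons a A ih =>
    intro U hU
    rw [Multiset.map_cons] at hU
    by_cases hm : f a ∈ U
    · have h1 : U.erase (f a) ≤ A.map f := Multiset.erase_le_iff_le_cons.2 hU
      obtain ⟨B, hB, hBm⟩ := ih _ h1
      refine ⟨a ::ₘ B, Multiset.cons_le_cons _ hB, ?_⟩
      rw [Multiset.map_cons, hBm, Multiset.cons_erase hm]
    · obtain ⟨B, hB, hBm⟩ := ih _ ((Multiset.le_cons_of_notMem hm).1 hU)
      exact ⟨B, le_trans hB (Multiset.le_cons_self _ _), hBm⟩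

lemma exists_decomp_of_le_add [DecidableEq α] {U A B : Multiset α} (h : U ≤ A + B) :
    ∃ U₁ U₂, U₁ ≤ A ∧ U₂ ≤ B ∧ U = U₁ + U₂ := by
  refine ⟨U ∩ A, U - U ∩ A, Multiset.inter_le_right, ?_, ?_⟩
  · rw [Multiset.le_iff_count]
    intro a
    have h1 := (Multiset.le_iff_count.1 h) a
    rw [Multiset.count_sub, Multiset.count_inter]
    rw [Multiset.count_add] at h1
    omega
  · ext a
    rw [Multiset.count_add, Multiset.count_sub, Multiset.count_inter]
    have h1 := (Multiset.le_iff_count.1 h) a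
    rw [Multiset.count_add] at h1
    omega

lemma multiset_partition (s : Multiset α) (k : α → ℕ) (D : Finset ℕ)
    (h : ∀ a ∈ s, k a ∈ D) : s = ∑ d ∈ D, s.filter (fun a => k a = d) := by
  induction s using Multiset.induction_on with
  | empty => simp
  | cons a s ih =>
    have ha : k a ∈ D := h a (Multiset.mem_cons_self _ _)
    have ih' := ih (fun b hb => h b (Multiset.mem_cons_of_mem hb))
    calc a ::ₘ s = {a} + s := by rw [← Multiset.singleton_add]
    _ = ∑ d ∈ D, (if k a = d then ({a} : Multiset α) else 0) + ∑ d ∈ D, s.filter (fun b => k b = d) := by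
        have hsingle : (∑ d ∈ D, if k a = d then ({a} : Multiset α) else 0) = {a} := by
          rw [Finset.sum_eq_single_of_mem (k a) ha (fun b _ hb => if_neg (fun h => hb h.symm)),
            if_pos rfl]
        rw [hsingle, ← ih']
    _ = ∑ d ∈ D, ((if k a = d then ({a} : Multiset α) else 0) + s.filter (fun b => k b = d)) := by
        rw [Finset.sum_add_distrib]
    _ = ∑ d ∈ D, (a ::ₘ s).filter (fun b => k b = d) := by
        refine Finset.sum_congr rfl fun d _ => ?_
        rw [Multiset.filter_cons]

end MultisetLemmas

section CrossNumberLemmas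

variable {G : Type*} [AddCommGroup G]

lemma crossNumber_zero : crossNumber (0 : Multiset G) = 0 := by simp [crossNumber]

lemma crossNumber_add (A B : Multiset G) :
    crossNumber (A + B) = crossNumber A + crossNumber B := by
  simp [crossNumber]

lemma crossNumber_singleton (g : G) : crossNumber ({g} : Multiset G) = 1 / (addOrderOf g) := by
  simp [crossNumber]

lemma crossNumber_nonneg (S : Multiset G) : 0 ≤ crossNumber S := by
  apply Multiset.sum_nonneg
  intro x hx
  obtain ⟨g, _, rfl⟩ := Multiset.mem_map.1 hx
  positivity

lemma crossNumber_const {V : Multiset G} {d : ℕ} (h : ∀ g ∈ V, addOrderOf g = d) :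
    crossNumber V = (Multiset.card V : ℝ) / d := by
  unfold crossNumber
  rw [Multiset.map_congr rfl (fun g hg => by rw [h g hg])]
  rw [Multiset.map_const', Multiset.sum_replicate, nsmul_eq_mul]
  ring

lemma crossNumber_finset_sum {ι : Type*} (D : Finset ι) (F : ι → Multiset G) :
    crossNumber (∑ d ∈ D, F d) = ∑ d ∈ D, crossNumber (F d) := by
  induction D using Finset.cons_induction_on with
  | empty => simp [crossNumber_zero]
  | cons a s ha ih =>
               rw [Finset.sum_cons, Finset.sum_cons, crossNumber_add, ih]

lemma crossNumber_map_inj {H : Type*} [AddCommGroup H] (e : G →+ H)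
    (he : Function.Injective e) (S : Multiset G) :
    crossNumber (S.map e) = crossNumber S := by
  unfold crossNumber
  rw [Multiset.map_map]
  congr 1
  exact Multiset.map_congr rfl fun g _ => by simp [addOrderOf_injective e he]

end CrossNumberLemmas

section ZSF

variable {G : Type*} [AddCommGroup G]

lemma zsf_replace [DecidableEq G] {S T : Multiset G} (hS : IsZeroSumFree S) (hT : T ≤ S) (hT0 : T ≠ 0) :
    IsZeroSumFree (S - T + {T.sum}) := by
  intro U hU hU0 hUs
  rw [add_comm, Multiset.singleton_add] at hU
  by_cases hm : T.sum ∈ U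
  · have h1 : U.erase T.sum ≤ S - T := Multiset.erase_le_iff_le_cons.2 hU
    have hW : U.erase T.sum + T ≤ S := by
      calc U.erase T.sum + T ≤ (S - T) + T := add_le_add_left h1 T
      _ = S := tsub_add_cancel_of_le hT
    refine hS _ hW (by simp [hT0]) ?_
    have : T.sum ::ₘ U.erase T.sum = U := Multiset.cons_erase hm
    have hsum : T.sum + (U.erase T.sum).sum = U.sum := by rw [← Multiset.sum_cons, this]
    rw [Multiset.sum_add]
    rw [hUs] at hsum
    linear_combination (norm := abel) hsum
  · have : U ≤ S - T := (Multiset.le_cons_of_notMem hm).1 hU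
    exact hS U (le_trans this (Multiset.sub_le_self _ _)) hU0 hUs

end ZSF


section Pigeonhole
variable {G : Type*} [AddCommGroup G] [Fintype G]

lemma exists_zerosum_of_card_le (S : Multiset G) (h : Fintype.card G ≤ Multiset.card S) :
    ∃ T, T ≤ S ∧ T ≠ 0 ∧ T.sum = 0 := by
  obtain ⟨l, rfl⟩ := Quotient.exists_rep S
  set L := l.length with hL
  have hcard : Multiset.card (⟦l⟧ : Multiset G) = L := rfl
  have hlt : Fintype.card G < Fintype.card (Fin (L + 1)) := by
    rw [Fintype.card_fin]; omega
  obtain ⟨i, j, hij, hfij⟩ := Fintype.exists_ne_map_eq_of_card_lt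
    (fun j : Fin (L + 1) => (l.take j).sum) hlt
  wlog hlt' : (i : ℕ) < (j : ℕ) generalizing i j
  · exact this j i hij.symm hfij.symm (by omega : (j:ℕ) < i)
  set seg := (l.drop i).take (j - i) with hseg
  have hsub : seg.Sublist l := ((l.drop i).take_sublist _).trans (l.drop_sublist i)
  refine ⟨(seg : Multiset G), ?_, ?_, ?_⟩
  · exact Multiset.coe_le.2 hsub.subperm
  · have hjL : (j : ℕ) ≤ L := by omega
    have : seg.length = j - i := by
      rw [hseg, List.length_take, List.length_drop]
      omega
    intro hc
    rw [Multiset.coe_eq_zero] at hc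
    rw [hc] at this
    simp at this
    omega
  · have htake : l.take j = l.take i ++ seg := by
      rw [hseg]
      have hji : (j : ℕ) = i + (j - i) := by omega
      conv_lhs => rw [hji]
      rw [List.take_add]
    have := hfij
    rw [htake, List.sum_append] at this
    have h0 : seg.sum = 0 := by
      have := congrArg (fun x => -(l.take i).sum + x) this
      simpa using this.symm
    rw [Multiset.sum_coe]
    exact h0

lemma exists_big_count (S : Multiset G) (E : ℕ)
    (h : E * Fintype.card G + 1 ≤ Multiset.card S) : ∃ g, E ≤ S.count g := by
  by_contra hc
  push_neg at hc
  have h1 : Multiset.card S = ∑ g ∈ S.toFinset, S.count g := (Multiset.toFinset_sum_count_eq S).symm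
  have h2 : ∑ g ∈ S.toFinset, S.count g ≤ S.toFinset.card * (E - 1) := by
    apply Finset.sum_le_card_nsmul
    intro g _
    have := hc g
    omega
  have h3 : S.toFinset.card ≤ Fintype.card G := S.toFinset.card_le_univ
  have h4 : S.toFinset.card * (E - 1) ≤ Fintype.card G * E := by
    calc S.toFinset.card * (E - 1) ≤ Fintype.card G * (E - 1) := Nat.mul_le_mul_right _ h3
    _ ≤ Fintype.card G * E := Nat.mul_le_mul_left _ (by omega)
  have : Fintype.card G * E = E * Fintype.card G := Nat.mul_comm _ _
  omega

lemma davenport_spec (G : Type*) [AddCommGroup G] [Fintype G] :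
    1 ≤ davenport G ∧ ∀ S : Multiset G, davenport G ≤ Multiset.card S →
      ∃ T, T ≤ S ∧ T ≠ 0 ∧ T.sum = 0 := by
  have hmem : (Fintype.card G + 1) ∈ {t | 1 ≤ t ∧ ∀ S : Multiset G, t ≤ Multiset.card S →
      ∃ T, T ≤ S ∧ T ≠ 0 ∧ T.sum = 0} := by
    refine ⟨by omega, fun S hS => exists_zerosum_of_card_le S (by omega)⟩
  exact Nat.sInf_mem (Set.nonempty_of_mem hmem)

lemma eta_spec (G : Type*) [AddCommGroup G] [Fintype G] :
    1 ≤ etaConst G ∧ ∀ S : Multiset G, etaConst G ≤ Multiset.card S →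
      ∃ T, T ≤ S ∧ T ≠ 0 ∧ Multiset.card T ≤ AddMonoid.exponent G ∧ T.sum = 0 := by
  set E := AddMonoid.exponent G with hE
  have hEpos : 0 < E := Nat.pos_of_ne_zero AddMonoid.exponent_ne_zero_of_finite
  have hmem : (E * Fintype.card G + 1) ∈ {t | 1 ≤ t ∧ ∀ S : Multiset G, t ≤ Multiset.card S →
      ∃ T, T ≤ S ∧ T ≠ 0 ∧ Multiset.card T ≤ AddMonoid.exponent G ∧ T.sum = 0} := by
    refine ⟨by omega, fun S hS => ?_⟩
    obtain ⟨g, hg⟩ := exists_big_count S E hS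
    refine ⟨Multiset.replicate E g, ?_, ?_, ?_, ?_⟩
    · rw [Multiset.le_iff_count]
      intro a
      rw [Multiset.count_replicate]
      split <;> simp_all
    · intro hc
      have := congrArg Multiset.card hc
      rw [Multiset.card_replicate] at this
      simp at this
      omega
    · simp [hE]
    · rw [Multiset.sum_replicate]
      exact AddMonoid.exponent_nsmul_eq_zero g
  exact Nat.sInf_mem (Set.nonempty_of_mem hmem)

lemma zsf_card_lt_davenport {S : Multiset G} (hS : IsZeroSumFree S) :
    Multiset.card S + 1 ≤ davenport G := by
  by_contra hc
  push_neg at hc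
  obtain ⟨T, hT, hT0, hTs⟩ := (davenport_spec G).2 S (by omega)
  exact hS T hT hT0 hTs

end Pigeonhole

section Psi

variable {d N : ℕ}

noncomputable def psi (hd : d ∣ N) : ZMod d →+ ZMod N :=
  ZMod.lift d ⟨(zmultiplesHom (ZMod N)) ((N / d : ℕ) : ZMod N), by
    show (d : ℤ) • ((N / d : ℕ) : ZMod N) = 0
    rw [natCast_zsmul, nsmul_eq_mul, ← Nat.cast_mul, Nat.mul_div_cancel' hd, ZMod.natCast_self]⟩

lemma psi_natCast (hd : d ∣ N) (k : ℕ) :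
    psi hd ((k : ZMod d)) = ((k * (N / d) : ℕ) : ZMod N) := by
  have : ((k : ZMod d)) = (((k : ℤ) : ZMod d)) := by push_cast; rfl
  rw [this]
  unfold psi
  rw [ZMod.lift_coe]
  show (k : ℤ) • ((N / d : ℕ) : ZMod N) = _
  rw [natCast_zsmul, nsmul_eq_mul, ← Nat.cast_mul]

lemma psi_injective (hN : N ≠ 0) [NeZero d] (hd : d ∣ N) : Function.Injective (psi hd) := by
  have hd0 : d ≠ 0 := NeZero.ne d
  rw [injective_iff_map_eq_zero]
  intro y hy
  have hyv : ((y.val : ZMod d)) = y := ZMod.natCast_rightInverse y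
  rw [← hyv, psi_natCast hd] at hy
  rw [ZMod.natCast_eq_zero_iff] at hy
  have hNd : N = d * (N / d) := (Nat.mul_div_cancel' hd).symm
  have hpos : 0 < N / d := Nat.div_pos (Nat.le_of_dvd (Nat.pos_of_ne_zero hN) hd)
    (Nat.pos_of_ne_zero hd0)
  obtain ⟨t, ht⟩ := hy
  have heq : y.val * (N / d) = (d * t) * (N / d) := by
    rw [ht]; conv_lhs => rw [hNd]
    ring
  have hdvd : d ∣ y.val := ⟨t, Nat.eq_of_mul_eq_mul_right hpos heq⟩
  have hlt : y.val < d := ZMod.val_lt y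
  have hz : y.val = 0 := Nat.eq_zero_of_dvd_of_lt hdvd hlt
  rw [← hyv, hz, Nat.cast_zero]

lemma psi_surj_torsion (hN : N ≠ 0) [NeZero d] (hd : d ∣ N) (x : ZMod N) (hx : d • x = 0) :
    ∃ y : ZMod d, psi hd y = x := by
  haveI : NeZero N := ⟨hN⟩
  have hxv : ((x.val : ZMod N)) = x := ZMod.natCast_rightInverse x
  have h1 : ((d * x.val : ℕ) : ZMod N) = 0 := by
    rw [Nat.cast_mul, ← nsmul_eq_mul, hxv, hx]
  rw [ZMod.natCast_eq_zero_iff] at h1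
  have hd0 : 0 < d := Nat.pos_of_ne_zero (NeZero.ne d)
  have h2 : (N / d) ∣ x.val := by
    have hNd : N = (N / d) * d := (Nat.div_mul_cancel hd).symm
    obtain ⟨t, ht⟩ := h1
    have heq : x.val * d = ((N / d) * t) * d := by
      rw [Nat.mul_comm x.val d, ht]; conv_lhs => rw [hNd]
      ring
    exact ⟨t, Nat.eq_of_mul_eq_mul_right hd0 heq⟩
  refine ⟨((x.val / (N / d) : ℕ) : ZMod d), ?_⟩
  rw [psi_natCast hd, Nat.div_mul_cancel h2, hxv]

lemma castHom_zero_smul (hp : (p : ℕ) ∣ d) [NeZero d] [NeZero p] (s : ZMod d)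
    (h : (ZMod.castHom hp (ZMod p)) s = 0) : (d / p) • s = 0 := by
  have hsv : ((s.val : ZMod d)) = s := ZMod.natCast_rightInverse s
  have h1 : ((s.val : ZMod p)) = 0 := by
    have h' := h
    rw [← hsv, ZMod.castHom_apply, ZMod.cast_natCast hp] at h'
    exact h'
  rw [ZMod.natCast_eq_zero_iff] at h1
  obtain ⟨t, ht⟩ := h1
  rw [← hsv, nsmul_eq_mul, ← Nat.cast_mul, ZMod.natCast_eq_zero_iff, ht]
  exact ⟨t, by rw [← Nat.mul_assoc, Nat.div_mul_cancel hp]⟩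

end Psi

section PiMaps

variable {d N p : ℕ}

noncomputable def edPi (r : ℕ) (hd : d ∣ N) : (Fin r → ZMod d) →+ (Fin r → ZMod N) :=
  AddMonoidHom.mk' (fun x i => psi hd (x i)) (fun x y => by funext i; simp [map_add])

lemma edPi_apply (r : ℕ) (hd : d ∣ N) (x : Fin r → ZMod d) (i : Fin r) :
    edPi r hd x i = psi hd (x i) := rfl

lemma edPi_injective (r : ℕ) (hN : N ≠ 0) [NeZero d] (hd : d ∣ N) :
    Function.Injective (edPi r hd) := by
  intro x y h
  funext i
  exact psi_injective hN hd (congrFun h i)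

lemma edPi_surj (r : ℕ) (hN : N ≠ 0) [NeZero d] (hd : d ∣ N)
    (x : Fin r → ZMod N) (hx : d • x = 0) : ∃ y, edPi r hd y = x := by
  have h : ∀ i, ∃ y : ZMod d, psi hd y = x i := fun i =>
    psi_surj_torsion hN hd (x i) (by have := congrFun hx i; simpa using this)
  choose y hy using h
  exact ⟨y, funext fun i => hy i⟩

noncomputable def piCast (r : ℕ) [NeZero d] [NeZero p] (hp : p ∣ d) :
    (Fin r → ZMod d) →+ (Fin r → ZMod p) :=
  AddMonoidHom.mk' (fun x i => ZMod.castHom hp (ZMod p) (x i))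
    (fun x y => by funext i; exact map_add (ZMod.castHom hp (ZMod p)) (x i) (y i))

lemma piCast_zero_smul (r : ℕ) [NeZero d] [NeZero p] (hp : p ∣ d) (s : Fin r → ZMod d)
    (h : piCast r hp s = 0) : (d / p) • s = 0 := by
  funext i
  have hi := congrFun h i
  have : (d / p) • s i = 0 := castHom_zero_smul hp (s i) hi
  simpa using this

end PiMaps

set_option maxHeartbeats 2000000 in
theorem core_bound (r N : ℕ) (hN : 1 < N) (S : Multiset (Fin r → ZMod N))
    (hS : IsZeroSumFree S) :
    crossNumber S ≤ ∑ d ∈ N.divisors,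
      ((min (etaConst (Fin r → ZMod d.minFac)) (davenport (Fin r → ZMod d)) : ℝ) - 1) / d := by
  have hN0 : N ≠ 0 := by omega
  haveI : NeZero N := ⟨hN0⟩
  set mfun : ℕ → ℕ := fun d =>
    min (etaConst (Fin r → ZMod d.minFac)) (davenport (Fin r → ZMod d)) with hmfun
  suffices H : ∀ n (S : Multiset (Fin r → ZMod N)), Multiset.card S = n → IsZeroSumFree S →
      crossNumber S ≤ ∑ d ∈ N.divisors, ((mfun d : ℝ) - 1) / d by
    have := H _ S rfl hS
    simpa [hmfun, Nat.cast_min] using this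
  clear hS S
  intro n
  induction n using Nat.strong_induction_on with
  | _ n IH =>
  intro S hcard hS
  set F : ℕ → Multiset (Fin r → ZMod N) := fun d => S.filter (fun g => addOrderOf g = d)
    with hF
  have hord : ∀ g ∈ S, addOrderOf g ∈ N.divisors := by
    intro g hg
    rw [Nat.mem_divisors]
    refine ⟨addOrderOf_dvd_of_nsmul_eq_zero ?_, hN0⟩
    funext i
    show N • g i = 0
    rw [nsmul_eq_mul, ZMod.natCast_self, zero_mul]
  by_cases hA : ∀ d ∈ N.divisors, Multiset.card (F d) + 1 ≤ mfun d
  · -- base case : all classes small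
    have hpart := multiset_partition S (fun g => addOrderOf g) N.divisors hord
    calc crossNumber S = ∑ d ∈ N.divisors, crossNumber (F d) := by
          conv_lhs => rw [hpart]
          exact crossNumber_finset_sum _ _
    _ ≤ ∑ d ∈ N.divisors, ((mfun d : ℝ) - 1) / d := by
        apply Finset.sum_le_sum
        intro d hd
        have hd0 : 0 < d := Nat.pos_of_mem_divisors hd
        rw [crossNumber_const (fun g hg => (Multiset.mem_filter.1 hg).2)]
        have hcF := hA d hd
        have h1 : (Multiset.card (F d) : ℝ) ≤ (mfun d : ℝ) - 1 := by
          have : (Multiset.card (F d) : ℝ) + 1 ≤ (mfun d : ℝ) := by exact_mod_cast hcF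
          linarith
        gcongr
  · push_neg at hA
    obtain ⟨d, hdmem, hcardF⟩ := hA
    have hmd : mfun d ≤ Multiset.card (F d) := by omega
    have hddvd : d ∣ N := (Nat.mem_divisors.1 hdmem).1
    have hdpos : 0 < d := Nat.pos_of_mem_divisors hdmem
    haveI : NeZero d := ⟨hdpos.ne'⟩
    haveI : NeZero d.minFac := ⟨(Nat.minFac_pos d).ne'⟩
    have hFord : ∀ g ∈ F d, addOrderOf g = d := fun g hg => (Multiset.mem_filter.1 hg).2
    have hmfun1 : 1 ≤ mfun d := le_min (eta_spec _).1 (davenport_spec _).1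
    have hd1 : d ≠ 1 := by
      intro h1
      have hFpos : 0 < Multiset.card (F d) := by omega
      obtain ⟨g, hg⟩ := Multiset.card_pos_iff_exists_mem.1 hFpos
      have hg0 : g = 0 := by
        have := hFord g hg
        rw [h1] at this
        exact AddMonoid.addOrderOf_eq_one_iff.1 this
      have hgS : g ∈ S := (Multiset.mem_filter.1 hg).1
      exact hS {g} (Multiset.singleton_le.2 hgS) (by simp) (by simp [hg0])
    set p := d.minFac with hpdef
    have hpprime : p.Prime := Nat.minFac_prime hd1
    have hpd : p ∣ d := Nat.minFac_dvd d
    -- pull back F d to (Fin r → ZMod d)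
    have hFd_torsion : ∀ g ∈ F d, d • g = 0 := by
      intro g hg
      rw [← hFord g hg]
      exact addOrderOf_nsmul_eq_zero g
    set ed := edPi (N := N) r hddvd with hed
    have hedinj : Function.Injective ⇑ed := edPi_injective r hN0 hddvd
    set ρ : (Fin r → ZMod N) → (Fin r → ZMod d) := Function.invFun ⇑ed with hρ
    set Y : Multiset (Fin r → ZMod d) := (F d).map ρ with hY
    have hYmap : Y.map ⇑ed = F d := by
      rw [hY, Multiset.map_map]
      have hptw : ∀ g ∈ F d, (⇑ed ∘ ρ) g = id g := by
        intro g hg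
        obtain ⟨y, hy⟩ := edPi_surj r hN0 hddvd g (hFd_torsion g hg)
        show ed (Function.invFun ⇑ed g) = g
        exact Function.invFun_eq ⟨y, hy⟩
      rw [Multiset.map_congr rfl hptw, Multiset.map_id]
    have hYcard : Multiset.card Y = Multiset.card (F d) := Multiset.card_map _ _
    rcases min_le_iff.1 hmd with hcase | hcase
    · -- eta case
      haveI : NeZero p := ⟨hpprime.pos.ne'⟩
      set π := piCast (d := d) (p := p) r hpd with hπ
      set Z := Y.map ⇑π with hZ
      obtain ⟨T₁, hT₁le, hT₁0, hT₁card, hT₁s⟩ := (eta_spec _).2 Z (by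
        rw [hZ, Multiset.card_map, hYcard]
        exact hcase)
      obtain ⟨T₀, hT₀le, hT₀map⟩ := exists_le_map Y T₁ hT₁le
      have hexp_le : AddMonoid.exponent (Fin r → ZMod p) ≤ p := by
        apply Nat.le_of_dvd hpprime.pos
        apply AddMonoid.exponent_dvd_of_forall_nsmul_eq_zero
        intro g; funext i
        show p • g i = 0
        rw [nsmul_eq_mul, ZMod.natCast_self, zero_mul]
      have hcardT₀ : Multiset.card T₀ ≤ p := by
        have hcc : Multiset.card T₁ = Multiset.card T₀ := by
          rw [← hT₀map, Multiset.card_map]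
        omega
      have hT₀0 : T₀ ≠ 0 := by
        intro h
        rw [h, Multiset.map_zero] at hT₀map
        exact hT₁0 hT₀map.symm
      have hπsum : π T₀.sum = 0 := by
        rw [map_multiset_sum, hT₀map, hT₁s]
      have hsm : (d / p) • T₀.sum = 0 := piCast_zero_smul r hpd T₀.sum hπsum
      set σ0 := T₀.sum with hσ0def
      set Td := T₀.map ⇑ed with hTd
      have hTd_le_Fd : Td ≤ F d := hYmap ▸ Multiset.map_le_map hT₀le
      have hTd_le_S : Td ≤ S := hTd_le_Fd.trans (Multiset.filter_le _ S)
      have hTd0 : Td ≠ 0 := by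
        rw [hTd, Ne, Multiset.map_eq_zero]
        exact hT₀0
      have hsumTd : Td.sum = ed σ0 := by rw [hTd, ← map_multiset_sum]
      have hσne : ed σ0 ≠ 0 := fun h => hS Td hTd_le_S hTd0 (by rw [hsumTd, h])
      have hordσ_dvd : addOrderOf (ed σ0) ∣ d / p := by
        rw [addOrderOf_injective ed hedinj]
        exact addOrderOf_dvd_of_nsmul_eq_zero hsm
      have hdp_pos : 0 < d / p := Nat.div_pos (Nat.minFac_le hdpos) hpprime.pos
      have hordσ_pos : 0 < addOrderOf (ed σ0) := by
        rcases Nat.eq_zero_or_pos (addOrderOf (ed σ0)) with h | h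
        · rw [h] at hordσ_dvd
          have := Nat.eq_zero_of_zero_dvd hordσ_dvd
          omega
        · exact h
      have hordσ_le : addOrderOf (ed σ0) ≤ d / p := Nat.le_of_dvd hdp_pos hordσ_dvd
      have hTdord : ∀ g ∈ Td, addOrderOf g = d := fun g hg =>
        hFord g (Multiset.mem_of_le hTd_le_Fd hg)
      have hcardTd : Multiset.card Td = Multiset.card T₀ := Multiset.card_map _ _
      have hTd2 : 2 ≤ Multiset.card Td := by
        by_contra hc
        push_neg at hc
        have hpos : 0 < Multiset.card Td := Multiset.card_pos.2 hTd0
        have h1 : Multiset.card Td = 1 := by omega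
        obtain ⟨a, ha⟩ := Multiset.card_eq_one.1 h1
        have haord : addOrderOf a = d := hTdord a (by rw [ha]; simp)
        have hsum_a : ed σ0 = a := by rw [← hsumTd, ha, Multiset.sum_singleton]
        have hdd : d ≤ d / p := by
          have hle := hordσ_le
          rw [hsum_a, haord] at hle
          exact hle
        have : d / p < d := Nat.div_lt_self hdpos hpprime.one_lt
        omega
      set S' := S - Td + {Td.sum} with hS'def
      have hS' : IsZeroSumFree S' := by
        rw [hS'def]
        exact zsf_replace hS hTd_le_S hTd0
      have hcardS' : Multiset.card S' < n := by
        rw [hS'def, Multiset.card_add, Multiset.card_sub hTd_le_S, Multiset.card_singleton]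
        have : Multiset.card Td ≤ Multiset.card S := Multiset.card_le_card hTd_le_S
        omega
      have hrec := IH _ hcardS' S' rfl hS'
      have hsplit : S = (S - Td) + Td := (tsub_add_cancel_of_le hTd_le_S).symm
      have e1 : crossNumber S = crossNumber (S - Td) + crossNumber Td := by
        conv_lhs => rw [hsplit]
        exact crossNumber_add _ _
      have e2 : crossNumber S' = crossNumber (S - Td) + 1 / (addOrderOf (ed σ0)) := by
        rw [hS'def, crossNumber_add, crossNumber_singleton, hsumTd]
      have e3 : crossNumber Td = (Multiset.card Td : ℝ) / d := crossNumber_const hTdord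
      have hb1 : (Multiset.card Td : ℝ) / d ≤ (p : ℝ) / d := by
        gcongr
        exact_mod_cast (hcardTd ▸ hcardT₀)
      have hb2 : (p : ℝ) / d ≤ 1 / (addOrderOf (ed σ0)) := by
        rw [div_le_div_iff₀ (by exact_mod_cast hdpos)
          (by exact_mod_cast hordσ_pos)]
        have hnat : p * addOrderOf (ed σ0) ≤ d := by
          calc p * addOrderOf (ed σ0) ≤ p * (d / p) := Nat.mul_le_mul_left _ hordσ_le
          _ = d := Nat.mul_div_cancel' hpd
        calc (p : ℝ) * (addOrderOf (ed σ0)) ≤ (d : ℝ) := by exact_mod_cast hnat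
        _ = 1 * d := (one_mul _).symm
      linarith
    · -- davenport case : contradiction
      exfalso
      obtain ⟨T₀, hT₀le, hT₀0, hT₀s⟩ := (davenport_spec _).2 Y (by omega)
      have hle1 : T₀.map ⇑ed ≤ F d := hYmap ▸ Multiset.map_le_map hT₀le
      refine hS (T₀.map ⇑ed) (hle1.trans (Multiset.filter_le _ S)) (by simp [hT₀0]) ?_
      rw [← map_multiset_sum, hT₀s, map_zero]

section Padding

noncomputable def ePi (r N : ℕ) (n : Fin r → ℕ) (hni : ∀ i, n i ∣ N) :
    (∀ i, ZMod (n i)) →+ (Fin r → ZMod N) :=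
  AddMonoidHom.mk' (fun x i => psi (hni i) (x i)) (fun x y => by funext i; simp [map_add])

lemma ePi_injective (r N : ℕ) (hN : N ≠ 0) (n : Fin r → ℕ) (hn : ∀ i, 1 < n i)
    (hni : ∀ i, n i ∣ N) : Function.Injective ⇑(ePi r N n hni) := by
  intro x y h
  funext i
  haveI : NeZero (n i) := ⟨by have := hn i; omega⟩
  exact psi_injective hN (hni i) (congrFun h i)

noncomputable def padW (r N : ℕ) (n : Fin r → ℕ) (b : Fin r → ℕ → ℕ) :
    Multiset (Fin r → ZMod N) :=
  ∑ i : Fin r, ∑ p ∈ (N / n i).primeFactors,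
    Multiset.replicate (p ^ ((N / n i).factorization p) - 1)
      (Pi.single i ((b i p : ℕ) : ZMod N))

lemma mem_padW {r N : ℕ} {n : Fin r → ℕ} {b : Fin r → ℕ → ℕ} {g : Fin r → ZMod N}
    (hg : g ∈ padW r N n b) :
    ∃ j p', p' ∈ (N / n j).primeFactors ∧ g = Pi.single j ((b j p' : ℕ) : ZMod N) := by
  rw [padW, Multiset.mem_sum] at hg
  obtain ⟨j, _, hg⟩ := hg
  rw [Multiset.mem_sum] at hg
  obtain ⟨p', hp', hg⟩ := hg
  exact ⟨j, p', hp', Multiset.eq_of_mem_replicate hg⟩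

lemma padding_zsf (r N : ℕ) (hN : 1 < N) (n : Fin r → ℕ) (hn : ∀ i, 1 < n i)
    (hni : ∀ i, n i ∣ N) (b : Fin r → ℕ → ℕ)
    (hblt : ∀ i p, p ∈ (N / n i).primeFactors → b i p < N)
    (hbq : ∀ i p p', p ∈ (N / n i).primeFactors → p' ∈ (N / n i).primeFactors → p' ≠ p →
      p ^ ((N / n i).factorization p) ∣ b i p')
    (hbco : ∀ i p, p ∈ (N / n i).primeFactors → ¬ p ∣ b i p)
    (S : Multiset (∀ i, ZMod (n i))) (hS : IsZeroSumFree S) :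
    IsZeroSumFree (S.map ⇑(ePi r N n hni) + padW r N n b) := by
  have hN0 : N ≠ 0 := by omega
  haveI : NeZero N := ⟨hN0⟩
  -- injectivity of the single elements
  have hw_inj : ∀ i p j p', p ∈ (N / n i).primeFactors → p' ∈ (N / n j).primeFactors →
      (Pi.single j ((b j p' : ℕ) : ZMod N) : Fin r → ZMod N) = Pi.single i ((b i p : ℕ) : ZMod N) →
      j = i ∧ p' = p := by
    intro i p j p' hp hp' heq
    have hbne0 : ((b j p' : ℕ) : ZMod N) ≠ 0 := by
      rw [Ne, ZMod.natCast_eq_zero_iff]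
      intro hdvd
      have hlt : b j p' < N := hblt j p' hp'
      have hb0 : b j p' = 0 := Nat.eq_zero_of_dvd_of_lt hdvd hlt
      exact hbco j p' hp' (by rw [hb0]; exact dvd_zero p')
    have hji : j = i := by
      by_contra hne
      have hcf := congrFun heq j
      rw [Pi.single_apply, Pi.single_apply, if_pos rfl, if_neg hne] at hcf
      exact hbne0 hcf
    subst hji
    refine ⟨rfl, ?_⟩
    have hval : ((b j p' : ℕ) : ZMod N) = ((b j p : ℕ) : ZMod N) := by
      have hcf := congrFun heq j
      rwa [Pi.single_apply, Pi.single_apply, if_pos rfl, if_pos rfl] at hcf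
    have hbeq : b j p' = b j p := by
      have h1 : b j p' < N := hblt _ _ hp'
      have h2 : b j p < N := hblt _ _ hp
      have hv := congrArg ZMod.val hval
      rwa [ZMod.val_cast_of_lt h1, ZMod.val_cast_of_lt h2] at hv
    by_contra hne
    have hpp : p.Prime := Nat.prime_of_mem_primeFactors hp
    have ha : 0 < (N / n j).factorization p := by
      have hc0 : N / n j ≠ 0 := by
        have : 0 < N / n j := Nat.div_pos (Nat.le_of_dvd (by omega) (hni j)) (by have := hn j; omega)
        omega
      exact hpp.factorization_pos_of_dvd hc0 (Nat.dvd_of_mem_primeFactors hp)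
    have hKdvd : p ^ ((N / n j).factorization p) ∣ b j p' := hbq j p p' hp hp' hne
    have hpb : p ∣ b j p := by
      rw [← hbeq]
      exact (dvd_pow_self p ha.ne').trans hKdvd
    exact hbco j p hp hpb
  intro U hU hU0 hUsum
  obtain ⟨U₁, U₂, hU₁, hU₂, rfl⟩ := exists_decomp_of_le_add hU
  -- counts of padding elements in U₂ vanish
  have hcount0 : ∀ i p, p ∈ (N / n i).primeFactors →
      Multiset.count (Pi.single i ((b i p : ℕ) : ZMod N)) U₂ = 0 := by
    intro i p hp
    have hpp : p.Prime := Nat.prime_of_mem_primeFactors hp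
    have hcpos : 0 < N / n i := Nat.div_pos (Nat.le_of_dvd (by omega) (hni i)) (by have := hn i; omega)
    have hcN : (N / n i) ∣ N := Nat.div_dvd_of_dvd (hni i)
    set a := (N / n i).factorization p with hadef
    have ha : 0 < a := hpp.factorization_pos_of_dvd (by omega) (Nat.dvd_of_mem_primeFactors hp)
    set K := p ^ a with hKdef
    have hKc : K ∣ N / n i := Nat.ordProj_dvd _ _
    have hKN : K ∣ N := hKc.trans hcN
    have hK1 : 1 < K := by
      calc 1 < p := hpp.one_lt
      _ = p ^ 1 := (pow_one p).symm
      _ ≤ p ^ a := Nat.pow_le_pow_right hpp.pos ha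
    haveI : NeZero K := ⟨by omega⟩
    set Φ : (Fin r → ZMod N) →+ ZMod K :=
      (ZMod.castHom hKN (ZMod K)).toAddMonoidHom.comp
        (Pi.evalAddMonoidHom (fun _ : Fin r => ZMod N) i) with hΦdef
    have hΦapp : ∀ u : Fin r → ZMod N, Φ u = (ZMod.castHom hKN (ZMod K)) (u i) := fun u => rfl
    have hΦe : ∀ x : (∀ j, ZMod (n j)), Φ (ePi r N n hni x) = 0 := by
      intro x
      rw [hΦapp]
      show (ZMod.castHom hKN (ZMod K)) (psi (hni i) (x i)) = 0
      haveI : NeZero (n i) := ⟨by have := hn i; omega⟩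
      have h1 : ((ZMod.val (x i) : ℕ) : ZMod (n i)) = x i := ZMod.natCast_rightInverse _
      rw [← h1, psi_natCast, ZMod.castHom_apply, ZMod.cast_natCast hKN,
        ZMod.natCast_eq_zero_iff]
      exact Dvd.dvd.mul_left hKc _
    have hΦw : ∀ j p', p' ∈ (N / n j).primeFactors → ¬(j = i ∧ p' = p) →
        Φ (Pi.single j ((b j p' : ℕ) : ZMod N)) = 0 := by
      intro j p' hp' hne
      rw [hΦapp, Pi.single_apply]
      by_cases hji : i = j
      · subst hji
        rw [if_pos rfl, ZMod.castHom_apply, ZMod.cast_natCast hKN,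
          ZMod.natCast_eq_zero_iff]
        have hp'ne : p' ≠ p := by
          intro h
          exact hne ⟨rfl, h⟩
        exact hbq i p p' hp hp' hp'ne
      · rw [if_neg hji, map_zero]
    -- Φ of the S-part is zero
    have hΦU₁ : Φ U₁.sum = 0 := by
      rw [map_multiset_sum]
      apply Multiset.sum_eq_zero
      intro x hx
      rw [Multiset.mem_map] at hx
      obtain ⟨u, hu, rfl⟩ := hx
      have humem : u ∈ S.map ⇑(ePi r N n hni) := Multiset.mem_of_le hU₁ hu
      rw [Multiset.mem_map] at humem
      obtain ⟨g, _, rfl⟩ := humem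
      exact hΦe g
    -- Φ of the padding part
    set k := Multiset.count (Pi.single i ((b i p : ℕ) : ZMod N)) U₂ with hkdef
    have hΦU₂ : Φ U₂.sum = ((k * b i p : ℕ) : ZMod K) := by
      have hsplit2 : U₂ = Multiset.replicate k (Pi.single i ((b i p : ℕ) : ZMod N))
          + U₂.filter (fun g => ¬ g = Pi.single i ((b i p : ℕ) : ZMod N)) := by
        conv_lhs => rw [← Multiset.filter_add_not
          (fun g => g = Pi.single i ((b i p : ℕ) : ZMod N)) U₂]
        rw [Multiset.filter_eq']
      have hs := congrArg Multiset.sum hsplit2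
      rw [Multiset.sum_add, Multiset.sum_replicate] at hs
      rw [hs, map_add, map_nsmul]
      have hrest : Φ (U₂.filter (fun g => ¬ g = Pi.single i ((b i p : ℕ) : ZMod N))).sum = 0 := by
        rw [map_multiset_sum]
        apply Multiset.sum_eq_zero
        intro x hx
        rw [Multiset.mem_map] at hx
        obtain ⟨u, hu, rfl⟩ := hx
        have hum := Multiset.mem_filter.1 hu
        obtain ⟨j, p', hp', rfl⟩ := mem_padW (Multiset.mem_of_le hU₂ hum.1)
        apply hΦw j p' hp'
        intro hpair
        obtain ⟨h1, h2⟩ := hpair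
        subst h1; subst h2
        exact hum.2 rfl
      rw [hrest, add_zero]
      rw [hΦapp, Pi.single_apply, if_pos rfl, ZMod.castHom_apply, ZMod.cast_natCast hKN,
        nsmul_eq_mul, ← Nat.cast_mul]
    have hΦtot : Φ ((U₁ + U₂).sum) = 0 := by rw [hUsum, map_zero]
    rw [Multiset.sum_add, map_add, hΦU₁, hΦU₂, zero_add,
      ZMod.natCast_eq_zero_iff] at hΦtot
    -- K ∣ k * b i p, K coprime to b i p, k < K  ⇒ k = 0
    have hco : Nat.Coprime K (b i p) :=
      Nat.Coprime.pow_left a ((Nat.Prime.coprime_iff_not_dvd hpp).2 (hbco i p hp))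
    have hKk : K ∣ k := hco.dvd_of_dvd_mul_right hΦtot
    have hkW : k ≤ K - 1 := by
      have hle := Multiset.count_le_of_le (Pi.single i ((b i p : ℕ) : ZMod N)) hU₂
      have hcW : Multiset.count (Pi.single i ((b i p : ℕ) : ZMod N)) (padW r N n b) = K - 1 := by
        rw [padW, Multiset.count_sum']
        rw [Finset.sum_eq_single_of_mem i (Finset.mem_univ i)]
        · rw [Multiset.count_sum']
          rw [Finset.sum_eq_single_of_mem p hp]
          · rw [Multiset.count_replicate, if_pos rfl]
          · intro p' hp' hne
            rw [Multiset.count_replicate, if_neg]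
            intro heq
            exact hne (hw_inj i p i p' hp hp' heq).2
        · intro j _ hne
          rw [Multiset.count_sum']
          apply Finset.sum_eq_zero
          intro p' hp'
          rw [Multiset.count_replicate, if_neg]
          intro heq
          exact hne (hw_inj i p j p' hp hp' heq).1
      omega
    have : k = 0 := Nat.eq_zero_of_dvd_of_lt hKk (by omega) |>.symm ▸ rfl
    exact this
  -- U₂ must be empty
  have hU₂0 : U₂ = 0 := by
    by_contra h
    obtain ⟨g, hg⟩ := Multiset.exists_mem_of_ne_zero h
    obtain ⟨j, p', hp', rfl⟩ := mem_padW (Multiset.mem_of_le hU₂ hg)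
    have hpos := Multiset.count_pos.2 hg
    rw [hcount0 j p' hp'] at hpos
    omega
  subst hU₂0
  rw [add_zero] at hU0 hUsum
  obtain ⟨B, hB, hBmap⟩ := exists_le_map S U₁ hU₁
  have hB0 : B ≠ 0 := by
    intro h
    rw [h, Multiset.map_zero] at hBmap
    exact hU0 hBmap.symm
  have hBsum : B.sum = 0 := by
    apply ePi_injective r N hN0 n hn hni
    rw [map_multiset_sum, hBmap, hUsum, map_zero]
  exact hS B hB hB0 hBsum

end Padding

section Assembly

lemma zsf_zero {G : Type*} [AddCommGroup G] : IsZeroSumFree (0 : Multiset G) := by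
  intro T hT hT0 _
  exact hT0 (Multiset.le_zero.1 hT)

lemma crossNumber_replicate {G : Type*} [AddCommGroup G] (m : ℕ) (x : G) :
    crossNumber (Multiset.replicate m x) = (m : ℝ) * (1 / addOrderOf x) := by
  unfold crossNumber
  rw [Multiset.map_replicate, Multiset.sum_replicate, nsmul_eq_mul]

lemma addOrderOf_single {r N : ℕ} (i : Fin r) (v : ZMod N) :
    addOrderOf (Pi.single i v : Fin r → ZMod N) = addOrderOf v :=
  addOrderOf_injective (AddMonoidHom.single (fun _ : Fin r => ZMod N) i)
    (Pi.single_injective (M := fun _ : Fin r => ZMod N) i) v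

lemma crossNumber_padW (r N : ℕ) (n : Fin r → ℕ) (b : Fin r → ℕ → ℕ) :
    crossNumber (padW r N n b) = ∑ i : Fin r, ∑ p ∈ (N / n i).primeFactors,
      ((p ^ ((N / n i).factorization p) - 1 : ℕ) : ℝ) *
        (1 / addOrderOf ((b i p : ℕ) : ZMod N)) := by
  rw [padW, crossNumber_finset_sum]
  refine Finset.sum_congr rfl fun i _ => ?_
  rw [crossNumber_finset_sum]
  refine Finset.sum_congr rfl fun p _ => ?_
  rw [crossNumber_replicate, addOrderOf_single]

lemma main_estimate (r N : ℕ) (hN : 1 < N) (n : Fin r → ℕ) (hn : ∀ i, 1 < n i)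
    (hni : ∀ i, n i ∣ N) (b : Fin r → ℕ → ℕ)
    (hblt : ∀ i p, p ∈ (N / n i).primeFactors → b i p < N)
    (hbq : ∀ i p p', p ∈ (N / n i).primeFactors → p' ∈ (N / n i).primeFactors → p' ≠ p →
      p ^ ((N / n i).factorization p) ∣ b i p')
    (hbco : ∀ i p, p ∈ (N / n i).primeFactors → ¬ p ∣ b i p)
    (S : Multiset (∀ i, ZMod (n i))) (hS : IsZeroSumFree S) :
    crossNumber S + crossNumber (padW r N n b) ≤ ∑ d ∈ N.divisors,
      ((min (etaConst (Fin r → ZMod d.minFac)) (davenport (Fin r → ZMod d)) : ℝ) - 1) / d := by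
  have h1 := core_bound r N hN _ (padding_zsf r N hN n hn hni b hblt hbq hbco S hS)
  rw [crossNumber_add, crossNumber_map_inj (ePi r N n hni)
    (ePi_injective r N (by omega) n hn hni)] at h1
  exact h1

end Assembly



section Final

theorem stmt4 (r : ℕ) (hr : 0 < r) (n : Fin r → ℕ)
    (hn : ∀ i, 1 < n i) (hdvd : ∀ i j : Fin r, i ≤ j → n i ∣ n j)
    (N : ℕ) (hN : N = n ⟨r - 1, by omega⟩) :
    littleCrossNumber (∀ i : Fin r, ZMod (n i)) ≤
      (∑ d ∈ N.divisors,
        ((min (etaConst (Fin r → ZMod d.minFac)) (davenport (Fin r → ZMod d)) : ℝ) - 1) / d)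
      - kStarTuple (fun i : Fin r => N / n i) / N ∧
    ((∀ i, Nat.gcd (n i) (N / n i) = 1) →
      littleCrossNumber (∀ i : Fin r, ZMod (n i)) ≤
        (∑ d ∈ N.divisors,
          ((min (etaConst (Fin r → ZMod d.minFac)) (davenport (Fin r → ZMod d)) : ℝ) - 1) / d)
        - kStarTuple (fun i : Fin r => N / n i)) := by
  have hNgt : 1 < N := by rw [hN]; exact hn _
  have hN0 : N ≠ 0 := by omega
  haveI : NeZero N := ⟨hN0⟩
  have hni : ∀ i, n i ∣ N := by
    intro i
    rw [hN]
    apply hdvd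
    rw [Fin.le_def]
    have := i.isLt
    simp only []
    omega
  have hsetne : Set.Nonempty {x : ℝ | ∃ S : Multiset (∀ i : Fin r, ZMod (n i)),
      IsZeroSumFree S ∧ crossNumber S = x} := ⟨0, 0, zsf_zero, crossNumber_zero⟩
  have hkstar : kStarTuple (fun i : Fin r => N / n i) = ∑ i : Fin r,
      ∑ p ∈ (N / n i).primeFactors,
        (((p : ℝ) ^ ((N / n i).factorization p)) - 1) / ((p : ℝ) ^ ((N / n i).factorization p)) :=
    rfl
  -- common facts for each (i, p)
  have hfacts : ∀ (i : Fin r) (p : ℕ), p ∈ (N / n i).primeFactors →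
      p.Prime ∧ 0 < N / n i ∧ (N / n i) ∣ N ∧ 0 < (N / n i).factorization p ∧
      p ^ ((N / n i).factorization p) ∣ (N / n i) ∧ 1 < p ^ ((N / n i).factorization p) := by
    intro i p hp
    have hpp : p.Prime := Nat.prime_of_mem_primeFactors hp
    have hcpos : 0 < N / n i :=
      Nat.div_pos (Nat.le_of_dvd (by omega) (hni i)) (by have := hn i; omega)
    have hcN : (N / n i) ∣ N := Nat.div_dvd_of_dvd (hni i)
    have ha : 0 < (N / n i).factorization p :=
      hpp.factorization_pos_of_dvd (by omega) (Nat.dvd_of_mem_primeFactors hp)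
    have hKc : p ^ ((N / n i).factorization p) ∣ (N / n i) := Nat.ordProj_dvd _ _
    have hK1 : 1 < p ^ ((N / n i).factorization p) := by
      calc 1 < p := hpp.one_lt
      _ = p ^ 1 := (pow_one p).symm
      _ ≤ p ^ ((N / n i).factorization p) := Nat.pow_le_pow_right hpp.pos ha
    exact ⟨hpp, hcpos, hcN, ha, hKc, hK1⟩
  constructor
  · -- Part 1 : general case
    set b1 : Fin r → ℕ → ℕ := fun i p => (N / n i) / p ^ ((N / n i).factorization p) with hb1
    have hblt : ∀ i p, p ∈ (N / n i).primeFactors → b1 i p < N := by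
      intro i p hp
      obtain ⟨hpp, hcpos, hcN, ha, hKc, hK1⟩ := hfacts i p hp
      calc b1 i p ≤ N / n i := Nat.div_le_self _ _
      _ < N := Nat.div_lt_self (by omega) (hn i)
    have hbq : ∀ i p p', p ∈ (N / n i).primeFactors → p' ∈ (N / n i).primeFactors → p' ≠ p →
        p ^ ((N / n i).factorization p) ∣ b1 i p' := by
      intro i p p' hp hp' hne
      obtain ⟨hpp, hcpos, hcN, ha, hKc, hK1⟩ := hfacts i p hp
      have hcomp0 : (N / n i) / p' ^ ((N / n i).factorization p') ≠ 0 :=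
        (Nat.ordCompl_pos p' (by omega)).ne'
      rw [hpp.pow_dvd_iff_le_factorization hcomp0, Nat.factorization_ordCompl,
        Finsupp.erase_ne hne.symm]
    have hbco : ∀ i p, p ∈ (N / n i).primeFactors → ¬ p ∣ b1 i p := by
      intro i p hp
      obtain ⟨hpp, hcpos, hcN, ha, hKc, hK1⟩ := hfacts i p hp
      exact Nat.not_dvd_ordCompl hpp (by omega)
    apply csSup_le hsetne
    rintro x ⟨S, hS, rfl⟩
    have hme := main_estimate r N hNgt n hn hni b1 hblt hbq hbco S hS
    have hWge : kStarTuple (fun i : Fin r => N / n i) / N ≤ crossNumber (padW r N n b1) := by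
      rw [crossNumber_padW, hkstar, Finset.sum_div]
      apply Finset.sum_le_sum
      intro i _
      rw [Finset.sum_div]
      apply Finset.sum_le_sum
      intro p hp
      obtain ⟨hpp, hcpos, hcN, ha, hKc, hK1⟩ := hfacts i p hp
      set K := p ^ ((N / n i).factorization p) with hKdef
      set o := addOrderOf ((b1 i p : ℕ) : ZMod N) with hodef
      have hopos : 0 < o := by
        rw [hodef]
        exact addOrderOf_pos _
      have hoN : o ∣ N := by
        rw [hodef]
        apply addOrderOf_dvd_of_nsmul_eq_zero
        rw [nsmul_eq_mul, ZMod.natCast_self, zero_mul]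
      have holeN : o ≤ N := Nat.le_of_dvd (by omega) hoN
      have hKR : ((K : ℝ)) = (p : ℝ) ^ ((N / n i).factorization p) := by
        rw [hKdef]; push_cast; ring
      have hcastK : ((K - 1 : ℕ) : ℝ) = (K : ℝ) - 1 := by
        have : 1 ≤ K := by omega
        push_cast [this]
        ring
      rw [← hKR, hcastK]
      have hK1R : (1 : ℝ) ≤ (K : ℝ) := by exact_mod_cast hK1.le
      have hoR : (0 : ℝ) < (o : ℝ) := by exact_mod_cast hopos
      have hNR : (0 : ℝ) < (N : ℝ) := by positivity
      have hoNR : (o : ℝ) ≤ (N : ℝ) := by exact_mod_cast holeN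
      calc ((K : ℝ) - 1) / (K : ℝ) / (N : ℝ) ≤ ((K : ℝ) - 1) / (N : ℝ) := by
            gcongr
            exact div_le_self (by linarith) hK1R
      _ ≤ ((K : ℝ) - 1) / (o : ℝ) := by
            apply div_le_div_of_nonneg_left (by linarith) hoR hoNR
      _ = ((K : ℝ) - 1) * (1 / (o : ℝ)) := by ring
    linarith
  · -- Part 2 : coprime case
    intro hgcd
    set b2 : Fin r → ℕ → ℕ := fun i p => N / p ^ ((N / n i).factorization p) with hb2
    have hblt : ∀ i p, p ∈ (N / n i).primeFactors → b2 i p < N := by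
      intro i p hp
      obtain ⟨hpp, hcpos, hcN, ha, hKc, hK1⟩ := hfacts i p hp
      exact Nat.div_lt_self (by omega) hK1
    have hbq : ∀ i p p', p ∈ (N / n i).primeFactors → p' ∈ (N / n i).primeFactors → p' ≠ p →
        p ^ ((N / n i).factorization p) ∣ b2 i p' := by
      intro i p p' hp hp' hne
      obtain ⟨hpp, hcpos, hcN, ha, hKc, hK1⟩ := hfacts i p hp
      obtain ⟨hpp', hcpos', hcN', ha', hKc', hK1'⟩ := hfacts i p' hp'
      have hK'N : p' ^ ((N / n i).factorization p') ∣ N := hKc'.trans hcN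
      have hb2ne : b2 i p' ≠ 0 := by
        have : 0 < N / p' ^ ((N / n i).factorization p') :=
          Nat.div_pos (Nat.le_of_dvd (by omega) hK'N) (by omega)
        simpa [hb2] using this.ne'
      rw [hpp.pow_dvd_iff_le_factorization hb2ne]
      have hfd : (N / p' ^ ((N / n i).factorization p')).factorization =
          N.factorization - (p' ^ ((N / n i).factorization p')).factorization :=
        Nat.factorization_div hK'N
      have hfp' : (p' ^ ((N / n i).factorization p')).factorization p = 0 := by
        rw [hpp'.factorization_pow, Finsupp.single_apply, if_neg hne]
      have hNc : (N / n i).factorization p ≤ N.factorization p := by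
        have hle := (Nat.factorization_le_iff_dvd (by omega) hN0).2 hcN
        exact hle p
      show (N / n i).factorization p ≤ (b2 i p').factorization p
      have : (b2 i p').factorization p = N.factorization p := by
        show (N / p' ^ ((N / n i).factorization p')).factorization p = _
        rw [hfd, Finsupp.tsub_apply, hfp', Nat.sub_zero]
      omega
    have hbco : ∀ i p, p ∈ (N / n i).primeFactors → ¬ p ∣ b2 i p := by
      intro i p hp
      obtain ⟨hpp, hcpos, hcN, ha, hKc, hK1⟩ := hfacts i p hp
      have hsplit : b2 i p = n i * ((N / n i) / p ^ ((N / n i).factorization p)) := by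
        show N / p ^ ((N / n i).factorization p) = _
        rw [← Nat.mul_div_assoc (n i) hKc, Nat.mul_div_cancel' (hni i)]
      rw [hsplit]
      intro hdv
      rcases (Nat.Prime.dvd_mul hpp).1 hdv with h | h
      · have hpc : p ∣ N / n i := Nat.dvd_of_mem_primeFactors hp
        have : p ∣ Nat.gcd (n i) (N / n i) := Nat.dvd_gcd h hpc
        rw [hgcd i] at this
        exact hpp.ne_one (Nat.dvd_one.1 this)
      · exact Nat.not_dvd_ordCompl hpp (by omega) h
    apply csSup_le hsetne
    rintro x ⟨S, hS, rfl⟩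
    have hme := main_estimate r N hNgt n hn hni b2 hblt hbq hbco S hS
    have hWge : kStarTuple (fun i : Fin r => N / n i) ≤ crossNumber (padW r N n b2) := by
      rw [crossNumber_padW, hkstar]
      apply Finset.sum_le_sum
      intro i _
      apply Finset.sum_le_sum
      intro p hp
      obtain ⟨hpp, hcpos, hcN, ha, hKc, hK1⟩ := hfacts i p hp
      set K := p ^ ((N / n i).factorization p) with hKdef
      have hKN : K ∣ N := hKc.trans hcN
      have hord : addOrderOf ((b2 i p : ℕ) : ZMod N) = K := by
        show addOrderOf ((N / K : ℕ) : ZMod N) = K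
        rw [ZMod.addOrderOf_coe _ hN0]
        rw [Nat.gcd_eq_right (Nat.div_dvd_of_dvd hKN)]
        exact Nat.div_div_self hKN hN0
      rw [hord]
      have hKR : ((K : ℝ)) = (p : ℝ) ^ ((N / n i).factorization p) := by
        rw [hKdef]; push_cast; ring
      have hcastK : ((K - 1 : ℕ) : ℝ) = (K : ℝ) - 1 := by
        have : 1 ≤ K := by omega
        push_cast [this]
        ring
      rw [← hKR, hcastK]
      have hKpos : (0 : ℝ) < (K : ℝ) := by positivity
      rw [div_eq_mul_one_div]
    linarith

end Final
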